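/- Every cluster morphism φ: L(t) → L(t') between seeds t = ({x_i}_{i∈I}, I_uf, B) and t' = ({y_j}_{j∈I'}, I'_uf, B') decomposes as φ = 𝔈_H ∘ 𝔉_E ∘ 𝔖_σ ∘ Del_F, where F = {i ∈ I : φ(x_i) = 1}, σ is the bijection from I∖F onto φ(I∖F) induced by φ (σ(i) = j when φ(x_i) = y_j), E = I'_uf ∖ φ(I_uf∖F), and H = I' ∖ φ(I∖F). -/

import Mathlib

open scoped BigOperators

noncomputable section

/-- The Laurent polynomial ring `ℚ[x_i^{±1} : i ∈ I]`, realized as the group algebra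
over `ℚ` of the free abelian group `I →₀ ℤ`. -/
abbrev LaurentRing (I : Type*) : Type _ := AddMonoidAlgebra ℚ (I →₀ ℤ)

instance (I : Type*) : IsDomain (LaurentRing I) := NoZeroDivisors.to_isDomain _

/-- The Laurent variable `x_i`. -/
def Xv {I : Type*} (i : I) : LaurentRing I :=
  AddMonoidAlgebra.single (Finsupp.single i 1) 1

/-- The inverse Laurent variable `x_i⁻¹`. -/
def Xinv {I : Type*} (i : I) : LaurentRing I :=
  AddMonoidAlgebra.single (Finsupp.single i (-1)) 1

/-- A seed on the vertex set `I`: a set `uf` of unfrozen vertices together with an integer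
exchange matrix `B` (rows indexed by `I`, columns meaningful only for `j ∈ uf`) whose
principal part is skew-symmetric.  The cluster variables of the seed are the standard
generators `Xv i` of the Laurent polynomial ring `LaurentRing I`. -/
structure Seed (I : Type*) where
  uf : Set I
  B : I → I → ℤ
  skew : ∀ i ∈ uf, ∀ j ∈ uf, B i j = - B j i

open Classical in
/-- Mutation of the exchange matrix at the vertex `k`:
`(μ_k B)_{ij} = -b_{ij}` if `i = k` or `j = k`, and
`(μ_k B)_{ij} = b_{ij} + sgn(b_{ik}) * max (b_{ik} b_{kj}) 0` otherwise. -/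
def mutB {I : Type*} (B : I → I → ℤ) (k : I) : I → I → ℤ := fun i j =>
  if i = k ∨ j = k then - B i j
  else B i j + (B i k).sign * max (B i k * B k j) 0

/-- The one-step mutated cluster variable `μ_k(x)_k`, as an element of the Laurent ring:
`(∏_{j : b_{jk} > 0} x_j^{b_{jk}} + ∏_{j : b_{jk} < 0} x_j^{-b_{jk}}) / x_k`. -/
def exchVar {I : Type*} (B : I → I → ℤ) (k : I) : LaurentRing I :=
  ((∏ᶠ j : I, Xv j ^ (max (B j k) 0).toNat) +
    (∏ᶠ j : I, Xv j ^ (max (-(B j k)) 0).toNat)) * Xinv k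

/-- A cluster morphism from the seed `t` to the seed `t'`: a ring homomorphism `hom`
between the Laurent polynomial rings sending each cluster variable `x_i` either to `1`
(the set of such `i` being `F`) or to a cluster variable `y_{vmap i}`, such that the induced
vertex map is injective on `I ∖ F`, maps unfrozen vertices off `F` to unfrozen vertices,
intertwines the one-step mutated variables there, and satisfies the sign condition
`b_{ij} * b'_{vmap i, vmap j} ≥ 0` on unfrozen vertices off `F`. -/
structure ClusterMorphism {I I' : Type*} (t : Seed I) (t' : Seed I') where
  hom : LaurentRing I →+* LaurentRing I'
  vmap : I → I'
  hx : ∀ i : I, hom (Xv i) = 1 ∨ hom (Xv i) = Xv (vmap i)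
  vinj : ∀ i i' : I, hom (Xv i) ≠ 1 → hom (Xv i') ≠ 1 → vmap i = vmap i' → i = i'
  huf : ∀ i ∈ t.uf, hom (Xv i) ≠ 1 → vmap i ∈ t'.uf
  hmut : ∀ i ∈ t.uf, hom (Xv i) ≠ 1 → hom (exchVar t.B i) = exchVar t'.B (vmap i)
  hsign : ∀ i ∈ t.uf, ∀ j ∈ t.uf, hom (Xv i) ≠ 1 → hom (Xv j) ≠ 1 →
    0 ≤ t.B i j * t'.B (vmap i) (vmap j)

/-- The ring homomorphism between Laurent rings induced by a map of the variable
index sets, `x_i ↦ x_{f i}`. -/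
def reindexHom {I I' : Type*} (f : I → I') : LaurentRing I →+* LaurentRing I' :=
  AddMonoidAlgebra.mapDomainRingHom ℚ (Finsupp.mapDomain.addMonoidHom f)

/-- The deleting morphism `Del_F`: the ring homomorphism with `x_i ↦ 1` for `i ∈ F` and
`x_j ↦ x_j` for `j ∉ F`. -/
def DelHom {I : Type*} (F : Set I) : LaurentRing I →+* LaurentRing {i : I // i ∉ F} :=
  AddMonoidAlgebra.mapDomainRingHom ℚ
    (AddMonoidHom.mk' (Finsupp.subtypeDomain (fun i => i ∉ F))
      (fun _ _ => Finsupp.subtypeDomain_add))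

/-- The similarity morphism `𝔖_σ`: the ring homomorphism with `x_i ↦ y_{σ i}`. -/
def SimHom {I I' : Type*} (σ : I → I') : LaurentRing I →+* LaurentRing I' :=
  reindexHom σ

/-- The freezing morphism `𝔉_E` attached to a set `E` of unfrozen vertices: on the level
of the Laurent polynomial rings it is the identity ring map (only the seed data changes). -/
def FreezeHom {I : Type*} {γ : Type*} (_E : Set γ) : LaurentRing I →+* LaurentRing I :=
  RingHom.id _

/-- The adding-vertices morphism `𝔈_H`, attached to the complement `s = I' ∖ H` of the
added vertex set: the inclusion `y_j ↦ y_j` of the Laurent polynomial ring on the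
variables indexed by `s`. -/
def IncHom {I' : Type*} (s : Set I') : LaurentRing ↥s →+* LaurentRing I' :=
  reindexHom (Subtype.val : ↥s → I')


section Aux

open AddMonoidAlgebra

lemma Xv_mul_Xinv {I : Type*} (i : I) : Xv i * Xinv i = 1 := by
  rw [Xv, Xinv, AddMonoidAlgebra.single_mul_single]
  norm_num
  rfl

lemma Xv_ne_zero {I : Type*} (i : I) : (Xv i : LaurentRing I) ≠ 0 := by
  rw [Xv]
  exact AddMonoidAlgebra.single_ne_zero.2 one_ne_zero

lemma single_int_nonneg {I : Type*} (i : I) (n : ℤ) (hn : 0 ≤ n) :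
    (AddMonoidAlgebra.single (Finsupp.single i n) (1 : ℚ) : LaurentRing I) = Xv i ^ n.toNat := by
  rw [Xv, AddMonoidAlgebra.single_pow, one_pow, Finsupp.smul_single]
  congr 2
  rw [nsmul_eq_mul]
  omega

lemma single_int_neg {I : Type*} (i : I) (n : ℤ) (hn : n < 0) :
    (AddMonoidAlgebra.single (Finsupp.single i n) (1 : ℚ) : LaurentRing I) = Xinv i ^ (-n).toNat := by
  rw [Xinv, AddMonoidAlgebra.single_pow, one_pow, Finsupp.smul_single]
  congr 2
  rw [nsmul_eq_mul]
  omega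

lemma laurent_hom_ext {I : Type*} {R : Type*} [Semiring R] {f g : LaurentRing I →+* R}
    (h1 : ∀ i, f (Xv i) = g (Xv i)) (h2 : ∀ i, f (Xinv i) = g (Xinv i)) : f = g := by
  apply AddMonoidAlgebra.ringHom_ext
  · intro b
    have hb : (AddMonoidAlgebra.single (0 : I →₀ ℤ) b : LaurentRing I) = algebraMap ℚ _ b := by
      simp [AddMonoidAlgebra.coe_algebraMap]
    rw [hb]
    exact RingHom.congr_fun
      (RingHom.ext_rat (f.comp (algebraMap ℚ (LaurentRing I)))
        (g.comp (algebraMap ℚ (LaurentRing I)))) b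
  · intro a
    induction a using Finsupp.induction with
    | zero =>
      have : (AddMonoidAlgebra.single (0 : I →₀ ℤ) (1 : ℚ) : LaurentRing I) = 1 := rfl
      rw [this, map_one, map_one]
    | single_add i n a hia hn ih =>
      have hmul : (AddMonoidAlgebra.single (Finsupp.single i n + a) (1 : ℚ) : LaurentRing I)
          = AddMonoidAlgebra.single (Finsupp.single i n) 1 * AddMonoidAlgebra.single a 1 := by
        rw [AddMonoidAlgebra.single_mul_single, one_mul]
      rw [hmul, map_mul, map_mul, ih]
      congr 1
      rcases le_or_gt 0 n with hn0 | hn0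
      · rw [single_int_nonneg i n hn0, map_pow, map_pow, h1]
      · rw [single_int_neg i n hn0, map_pow, map_pow, h2]

lemma subtypeDomain_single_mem {I : Type*} {F : Set I} (i : I) (h : i ∈ F) (n : ℤ) :
    Finsupp.subtypeDomain (fun i => i ∉ F) (Finsupp.single i n) = 0 := by
  classical
  ext j
  rw [Finsupp.subtypeDomain_apply, Finsupp.single_apply, if_neg, Finsupp.coe_zero, Pi.zero_apply]
  rintro rfl; exact j.2 h

lemma subtypeDomain_single_not_mem {I : Type*} {F : Set I} (i : I) (h : i ∉ F) (n : ℤ) :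
    Finsupp.subtypeDomain (fun i => i ∉ F) (Finsupp.single i n) =
      Finsupp.single (⟨i, h⟩ : {i // i ∉ F}) n := by
  classical
  ext j
  rw [Finsupp.subtypeDomain_apply, Finsupp.single_apply, Finsupp.single_apply]
  simp [Subtype.ext_iff]

lemma reindexHom_single {I I' : Type*} (f : I → I') (a : I →₀ ℤ) (q : ℚ) :
    reindexHom f (AddMonoidAlgebra.single a q) =
      AddMonoidAlgebra.single (Finsupp.mapDomain f a) q := by
  simp [reindexHom, AddMonoidAlgebra.mapDomainRingHom]

lemma DelHom_single {I : Type*} (F : Set I) (a : I →₀ ℤ) (q : ℚ) :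
    DelHom F (AddMonoidAlgebra.single a q) =
      AddMonoidAlgebra.single (Finsupp.subtypeDomain (fun i => i ∉ F) a) q := by
  simp [DelHom, AddMonoidAlgebra.mapDomainRingHom]

lemma Xv_ne_one {I : Type*} (j : I) : (Xv j : LaurentRing I) ≠ 1 := by
  intro h
  rw [Xv, AddMonoidAlgebra.one_def, AddMonoidAlgebra.single_left_inj one_ne_zero] at h
  exact one_ne_zero (Finsupp.single_eq_zero.1 h)

lemma FreezeHom_apply {I γ : Type*} (E : Set γ) (x : LaurentRing I) : FreezeHom E x = x := rfl

lemma single_zero_one {I : Type*} :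
    (AddMonoidAlgebra.single (0 : I →₀ ℤ) (1 : ℚ) : LaurentRing I) = 1 := rfl

lemma hom_Xinv_one {I I' : Type*} (φ : LaurentRing I →+* LaurentRing I') (i : I)
    (h : φ (Xv i) = 1) : φ (Xinv i) = 1 := by
  have := congrArg φ (Xv_mul_Xinv i)
  rwa [map_mul, map_one, h, one_mul] at this

lemma hom_Xinv_Xv {I I' : Type*} (φ : LaurentRing I →+* LaurentRing I') (i : I) (j : I')
    (h : φ (Xv i) = Xv j) : φ (Xinv i) = Xinv j := by
  have h1 := congrArg φ (Xv_mul_Xinv i)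
  rw [map_mul, map_one, h] at h1
  have h2 := Xv_mul_Xinv j
  exact mul_left_cancel₀ (Xv_ne_zero j) (h1.trans h2.symm)

end Aux

/-- Every cluster morphism `φ : L(t) → L(t')` decomposes as
`φ = 𝔈_H ∘ 𝔉_E ∘ 𝔖_σ ∘ Del_F`, where `F = {i ∈ I : φ(x_i) = 1}`, `σ` is the bijection
from `I ∖ F` onto `φ(I ∖ F)` induced by `φ`, `E = I'_uf ∖ φ(I_uf ∖ F)`, and
`H = I' ∖ φ(I ∖ F)` (so that `𝔈_H` is the inclusion of the variables indexed by
`I' ∖ H = φ(I ∖ F)`). -/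
theorem statement5 {I I' : Type*} [Finite I] [Finite I'] (t : Seed I) (t' : Seed I')
    (c : ClusterMorphism t t') :
    c.hom =
      (IncHom (c.vmap '' {i : I | c.hom (Xv i) ≠ 1})).comp
        ((FreezeHom (I := ↥(c.vmap '' {i : I | c.hom (Xv i) ≠ 1}))
            (t'.uf \ c.vmap '' {i : I | i ∈ t.uf ∧ c.hom (Xv i) ≠ 1})).comp
          ((SimHom (fun i : {i : I // i ∉ {i : I | c.hom (Xv i) = 1}} =>
              (⟨c.vmap i.1, ⟨i.1, i.2, rfl⟩⟩ :
                ↥(c.vmap '' {i : I | c.hom (Xv i) ≠ 1})))).comp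
            (DelHom {i : I | c.hom (Xv i) = 1}))) := by
  classical
  refine laurent_hom_ext (fun i => ?_) (fun i => ?_)
  · rcases c.hx i with h | h
    · rw [h]
      conv_rhs => rw [RingHom.comp_apply, RingHom.comp_apply, RingHom.comp_apply,
        show (Xv i : LaurentRing I) = AddMonoidAlgebra.single (Finsupp.single i 1) 1 from rfl,
        DelHom_single, subtypeDomain_single_mem i h, single_zero_one,
        map_one, map_one, map_one]
    · have hne : c.hom (Xv i) ≠ 1 := h ▸ Xv_ne_one _
      have hi : i ∉ {i : I | c.hom (Xv i) = 1} := hne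
      rw [h]
      conv_rhs => rw [RingHom.comp_apply, RingHom.comp_apply, RingHom.comp_apply,
        show (Xv i : LaurentRing I) = AddMonoidAlgebra.single (Finsupp.single i 1) 1 from rfl,
        DelHom_single, subtypeDomain_single_not_mem i hi, SimHom, reindexHom_single,
        Finsupp.mapDomain_single, FreezeHom_apply, IncHom, reindexHom_single,
        Finsupp.mapDomain_single]
      rfl
  · rcases c.hx i with h | h
    · rw [hom_Xinv_one c.hom i h]
      conv_rhs => rw [RingHom.comp_apply, RingHom.comp_apply, RingHom.comp_apply,
        show (Xinv i : LaurentRing I) = AddMonoidAlgebra.single (Finsupp.single i (-1)) 1 from rfl,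
        DelHom_single, subtypeDomain_single_mem i h, single_zero_one,
        map_one, map_one, map_one]
    · have hne : c.hom (Xv i) ≠ 1 := h ▸ Xv_ne_one _
      have hi : i ∉ {i : I | c.hom (Xv i) = 1} := hne
      rw [hom_Xinv_Xv c.hom i _ h]
      conv_rhs => rw [RingHom.comp_apply, RingHom.comp_apply, RingHom.comp_apply,
        show (Xinv i : LaurentRing I) = AddMonoidAlgebra.single (Finsupp.single i (-1)) 1 from rfl,
        DelHom_single, subtypeDomain_single_not_mem i hi, SimHom, reindexHom_single,
        Finsupp.mapDomain_single, FreezeHom_apply, IncHom, reindexHom_single,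
        Finsupp.mapDomain_single]
      rfl

end
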